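/- Let D be odd and B ∈ S_D with |B| = (D−1)/2, E = 𝔼_B. Then η_D ∉ E and 𝔽η_D ⊕ E ∈ 𝒻(V_D), i.e., the subspace spanned by η_D together with E again belongs to the family 𝒻(V_D). -/

import Mathlib

open Finset

abbrev Vec := ℕ →₀ ZMod 2

/-- The basis vector `e_i`. -/
noncomputable def e (i : ℕ) : Vec := Finsupp.single i 1

/-- For an interval `p = (a,b)` (representing `[a,b]`), the vector `e_I = ∑_{i∈[a,b]} e_i`. -/
noncomputable def eI (p : ℕ × ℕ) : Vec := ∑ j ∈ Finset.Icc p.1 p.2, e j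

/-- The map `ξ_i` on intervals. -/
def tint (i : ℕ) (p : ℕ × ℕ) : ℕ × ℕ :=
  if i ≤ p.1 then (p.1 + 2, p.2 + 2)
  else if p.2 + 2 ≤ i then p
  else (p.1, p.2 + 2)

/-- The map `t_i` on sets of intervals: `t_i(B') = ξ_i(B') ∪ {[i,i]}`. -/
def tmap (i : ℕ) (B : Finset (ℕ × ℕ)) : Finset (ℕ × ℕ) :=
  B.image (tint i) ∪ {(i, i)}

/-- The inductively defined family `S_D`. -/
inductive IsS : ℕ → Finset (ℕ × ℕ) → Prop
  | empty (D : ℕ) : IsS D ∅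
  | one : IsS 1 {(1, 1)}
  | step (D i : ℕ) (B' : Finset (ℕ × ℕ)) (h1 : 1 ≤ i) (h2 : i ≤ D + 2)
      (h : IsS D B') : IsS (D + 2) (tmap i B')

def primEven (D k : ℕ) : Finset (ℕ × ℕ) := (Finset.Icc 1 k).image fun j => (j, D + 1 - j)
def primOddA (D k : ℕ) : Finset (ℕ × ℕ) := (Finset.Icc 1 k).image fun j => (j, D - j)
def primOddB (D k : ℕ) : Finset (ℕ × ℕ) := (Finset.Icc 1 k).image fun j => (j + 1, D + 1 - j)

/-- The primitive elements of `𝕊_D`. -/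
def IsPrim (D : ℕ) (B : Finset (ℕ × ℕ)) : Prop :=
  B = ∅ ∨
  (Even D ∧ ∃ k, 1 ≤ k ∧ k ≤ D / 2 ∧ B = primEven D k) ∨
  (Odd D ∧ ∃ k, Odd k ∧ 1 ≤ k ∧ k ≤ (D - 1) / 2 ∧ (B = primOddA D k ∨ B = primOddB D k))

/-- The inductively defined family `𝕊_D`. -/
inductive IsSS : ℕ → Finset (ℕ × ℕ) → Prop
  | prim (D : ℕ) (B : Finset (ℕ × ℕ)) : IsPrim D B → IsSS D B
  | one : IsSS 1 {(1, 1)}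
  | step (D i : ℕ) (B' : Finset (ℕ × ℕ)) (h1 : 1 ≤ i) (h2 : i ≤ D + 2)
      (h : IsSS D B') : IsSS (D + 2) (tmap i B')

/-- The subspace `𝔼_B` spanned by the `e_I`, `I ∈ B`. -/
noncomputable def EB (B : Finset (ℕ × ℕ)) : Submodule (ZMod 2) Vec :=
  Submodule.span (ZMod 2) (eI '' (B : Set (ℕ × ℕ)))

/-- Two intervals are non-touching. -/
def Nontouch (p q : ℕ × ℕ) : Prop := p.2 + 2 ≤ q.1 ∨ q.2 + 2 ≤ p.1

/-- `p ≺ q`: `p = [a,b]` is strictly nested inside `q = [a',b']`, i.e. `a' < a ≤ b < b'`. -/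
def Nested (p q : ℕ × ℕ) : Prop := q.1 < p.1 ∧ p.1 ≤ p.2 ∧ p.2 < q.2

/-- `η_D = e_1 + e_3 + ⋯ + e_D` (`D` odd). -/
noncomputable def eta (D : ℕ) : Vec := ∑ j ∈ (Finset.Icc 1 D).filter (fun j => j % 2 = 1), e j

noncomputable def Tfun (i k : ℕ) : Vec :=
  if k + 1 < i then e k
  else if k + 1 = i then e k + e (k + 1) + e (k + 2)
  else e (k + 2)

/-- The linear map `T_i : V_{D-2} → V_D`. -/
noncomputable def Tlin (i : ℕ) : Vec →ₗ[ZMod 2] Vec :=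
  Finsupp.linearCombination (ZMod 2) (Tfun i)

/-- The inductively defined family `𝒻(V_D)` of subspaces. -/
inductive IsF : ℕ → Submodule (ZMod 2) Vec → Prop
  | zero (D : ℕ) : IsF D ⊥
  | one : IsF 1 (Submodule.span (ZMod 2) {e 1})
  | step (D i : ℕ) (E' : Submodule (ZMod 2) Vec) (h1 : 1 ≤ i) (h2 : i ≤ D + 2)
      (h : IsF D E') :
      IsF (D + 2) (Submodule.map (Tlin i) E' ⊔ Submodule.span (ZMod 2) {e i})

/-- The subspace `V_D = ⟨e_1,…,e_D⟩`. -/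
noncomputable def VD (D : ℕ) : Submodule (ZMod 2) Vec :=
  Submodule.span (ZMod 2) (e '' Set.Icc 1 D)

/-- The symplectic form with `(e_i,e_j) = 1` iff `|i-j| = 1`. -/
noncomputable def symp (x y : Vec) : ZMod 2 :=
  x.sum fun i xi => xi * (y (i + 1) + if 1 ≤ i then y (i - 1) else 0)



-- scratch lemmas
lemma Tlin_e (i j : ℕ) : Tlin i (e j) = Tfun i j := by
  rw [Tlin, e, Finsupp.linearCombination_single, one_smul]

lemma eta_apply (D m : ℕ) :
    eta D m = if 1 ≤ m ∧ m ≤ D ∧ m % 2 = 1 then 1 else 0 := by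
  rw [eta, Finsupp.finset_sum_apply]
  simp only [e, Finsupp.single_apply]
  rw [Finset.sum_ite_eq' _ m (fun _ => (1 : ZMod 2))]
  simp [Finset.mem_filter, Finset.mem_Icc, and_assoc]

lemma eI_apply (p : ℕ × ℕ) (m : ℕ) :
    eI p m = if p.1 ≤ m ∧ m ≤ p.2 then 1 else 0 := by
  rw [eI, Finsupp.finset_sum_apply]
  simp only [e, Finsupp.single_apply]
  rw [Finset.sum_ite_eq' _ m (fun _ => (1 : ZMod 2))]
  simp [Finset.mem_Icc]

lemma sum_ite_eq_shift (s : Finset ℕ) (k m : ℕ) (c : ZMod 2) :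
    (∑ j ∈ s, if j + k = m then c else 0) = if k ≤ m ∧ m - k ∈ s then c else 0 := by
  rcases le_or_gt k m with hk | hk
  · rw [Finset.sum_congr rfl (fun j _ => if_congr (by omega : (j + k = m) ↔ (j = m - k)) rfl rfl),
      Finset.sum_ite_eq' s (m - k) (fun _ => c)]
    simp [hk]
  · rw [Finset.sum_eq_zero (fun j _ => if_neg (by omega)), if_neg (by omega)]

lemma Tfun_apply (i j m : ℕ) :
    (Tfun i j) m =
      (if j = m then (if m + 1 ≤ i then (1 : ZMod 2) else 0) else 0) +
      (if j + 1 = m then (if m = i then (1 : ZMod 2) else 0) else 0) +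
      (if j + 2 = m then (if i ≤ m - 1 then (1 : ZMod 2) else 0) else 0) := by
  unfold Tfun
  split_ifs <;>
    simp_all [e, Finsupp.single_apply, Finsupp.add_apply] <;>
    first | rfl | decide | omega | (exfalso; omega)

lemma Tsum_apply (i m : ℕ) (s : Finset ℕ) :
    (∑ j ∈ s, Tfun i j) m =
      (if m ∈ s then (if m + 1 ≤ i then (1 : ZMod 2) else 0) else 0) +
      (if 1 ≤ m ∧ m - 1 ∈ s then (if m = i then (1 : ZMod 2) else 0) else 0) +
      (if 2 ≤ m ∧ m - 2 ∈ s then (if i ≤ m - 1 then (1 : ZMod 2) else 0) else 0) := by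
  rw [Finsupp.finset_sum_apply, Finset.sum_congr rfl (fun j _ => Tfun_apply i j m),
    Finset.sum_add_distrib, Finset.sum_add_distrib,
    Finset.sum_ite_eq' s m (fun _ => if m + 1 ≤ i then (1 : ZMod 2) else 0),
    sum_ite_eq_shift s 1 m, sum_ite_eq_shift s 2 m]

lemma Tlin_eta' (D i : ℕ) (hD : Odd D) (h1 : 1 ≤ i) (h2 : i ≤ D + 2) :
    Tlin i (eta D) = eta (D + 2) + e i := by
  have hsum : Tlin i (eta D)
      = ∑ j ∈ (Finset.Icc 1 D).filter (fun j => j % 2 = 1), Tfun i j := by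
    rw [eta, map_sum]
    exact Finset.sum_congr rfl fun j _ => Tlin_e i j
  ext m
  rw [hsum, Tsum_apply, Finsupp.add_apply, eta_apply, e, Finsupp.single_apply]
  rw [Nat.odd_iff] at hD
  simp only [Finset.mem_filter, Finset.mem_Icc]
  split_ifs <;> first | rfl | decide | (exfalso; omega)

lemma eI_tint (i : ℕ) (p : ℕ × ℕ) : Tlin i (eI p) = eI (tint i p) := by
  obtain ⟨a, b⟩ := p
  have hsum : Tlin i (eI (a, b)) = ∑ j ∈ Finset.Icc a b, Tfun i j := by
    rw [eI, map_sum]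
    exact Finset.sum_congr rfl fun j _ => Tlin_e i j
  ext m
  rw [hsum, Tsum_apply]
  simp only [tint, apply_ite (fun q : ℕ × ℕ => eI q m), eI_apply, Finset.mem_Icc]
  split_ifs <;> first | rfl | decide | (exfalso; omega)

lemma eI_pair (i : ℕ) : eI (i, i) = e i := by
  rw [eI]; simp

lemma EB_tmap (i : ℕ) (B : Finset (ℕ × ℕ)) :
    EB (tmap i B) = (EB B).map (Tlin i) ⊔ Submodule.span (ZMod 2) {e i} := by
  rw [EB, tmap, Finset.coe_union, Set.image_union, Submodule.span_union]
  congr 1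
  · rw [Finset.coe_image, Set.image_image, EB]
    rw [show (fun p => eI (tint i p)) = (fun p => Tlin i (eI p)) from
      funext fun p => (eI_tint i p).symm]
    rw [← Set.image_image (fun v => Tlin i v) eI, Submodule.span_image]
  · rw [Finset.coe_singleton, Set.image_singleton, eI_pair]

noncomputable def phi (i : ℕ) : Vec →ₗ[ZMod 2] ZMod 2 :=
  Finsupp.lapply i + Finsupp.lapply (i + 1)

lemma phi_apply (i : ℕ) (v : Vec) : phi i v = v i + v (i + 1) := rfl

lemma Tfun_phi (i k : ℕ) : (Tfun i k) i + (Tfun i k) (i + 1) = 0 := by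
  unfold Tfun
  split_ifs with h1 h2 <;>
    simp only [e, Finsupp.add_apply, Finsupp.single_apply] <;>
    split_ifs <;> first | rfl | decide | (exfalso; omega)

lemma phi_Tlin (i : ℕ) (v : Vec) : phi i (Tlin i v) = 0 := by
  induction v using Finsupp.induction_linear with
  | zero => simp
  | add f g hf hg => rw [map_add, map_add, hf, hg, add_zero]
  | single a b =>
    rw [Tlin, Finsupp.linearCombination_single, map_smul, phi_apply, Tfun_phi, smul_zero]

lemma phi_e_self (i : ℕ) : phi i (e i) = 1 := by
  rw [phi_apply, e, Finsupp.single_eq_same, Finsupp.single_eq_of_ne (by omega), add_zero]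

lemma phi_eta (D i : ℕ) (hD : Odd D) (h1 : 1 ≤ i) (h2 : i ≤ D) : phi i (eta D) = 1 := by
  rw [Nat.odd_iff] at hD
  rw [phi_apply, eta_apply, eta_apply]
  split_ifs <;> first | rfl | decide | (exfalso; omega)

noncomputable def Sfun (i k : ℕ) : Vec :=
  if k = i ∨ k = i + 1 then 0 else if i + 2 ≤ k then e (k - 2) else e k

noncomputable def Slin (i : ℕ) : Vec →ₗ[ZMod 2] Vec :=
  Finsupp.linearCombination (ZMod 2) (Sfun i)

lemma Slin_e (i k : ℕ) : Slin i (e k) = Sfun i k := by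
  rw [Slin, e, Finsupp.linearCombination_single, one_smul]

lemma Slin_Tfun (i a : ℕ) : Slin i (Tfun i a) = e a := by
  unfold Tfun
  split_ifs with hh1 hh2
  · rw [Slin_e]; unfold Sfun
    rw [if_neg (by omega), if_neg (by omega)]
  · rw [map_add, map_add, Slin_e, Slin_e, Slin_e]
    unfold Sfun
    rw [if_neg (by omega), if_neg (by omega), if_pos (by omega), if_pos (by omega)]
    simp
  · rw [Slin_e]; unfold Sfun
    rw [if_neg (by omega), if_pos (by omega)]
    congr 1

lemma Slin_Tlin (i : ℕ) (v : Vec) : Slin i (Tlin i v) = v := by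
  induction v using Finsupp.induction_linear with
  | zero => simp
  | add f g hf hg => rw [map_add, map_add, hf, hg]
  | single a b =>
    rw [Tlin, Finsupp.linearCombination_single, map_smul, Slin_Tfun, e,
      Finsupp.smul_single, smul_eq_mul, mul_one]

lemma sup_span_add (v w : Vec) (W : Submodule (ZMod 2) Vec) (hw : w ∈ W) :
    Submodule.span (ZMod 2) {v + w} ⊔ W = Submodule.span (ZMod 2) {v} ⊔ W := by
  have hww : w + w = 0 := by
    rw [← two_smul (ZMod 2) w, show (2 : ZMod 2) = 0 from rfl, zero_smul]
  apply le_antisymm <;>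
    refine sup_le ?_ le_sup_right <;>
    rw [Submodule.span_le, Set.singleton_subset_iff]
  · exact add_mem (Submodule.mem_sup_left (Submodule.mem_span_singleton_self v))
      (Submodule.mem_sup_right hw)
  · have hv : (v + w) + w ∈ Submodule.span (ZMod 2) {v + w} ⊔ W :=
      add_mem (Submodule.mem_sup_left (Submodule.mem_span_singleton_self (v + w)))
        (Submodule.mem_sup_right hw)
    rwa [add_assoc, hww, add_zero] at hv

lemma isS_valid {D : ℕ} {B : Finset (ℕ × ℕ)} (h : IsS D B) :
    ∀ p ∈ B, 1 ≤ p.1 ∧ p.1 ≤ p.2 := by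
  induction h with
  | empty D => simp
  | one =>
    intro p hp
    simp only [Finset.mem_singleton] at hp
    subst hp; exact ⟨le_refl 1, le_refl 1⟩
  | step D i B' h1 h2 hB IH =>
    intro p hp
    rw [tmap, Finset.mem_union] at hp
    rcases hp with hp | hp
    · obtain ⟨q, hq, rfl⟩ := Finset.mem_image.mp hp
      have hv := IH q hq
      obtain ⟨a, b⟩ := q
      simp only [tint]
      split_ifs <;> simp_all <;> omega
    · simp only [Finset.mem_singleton] at hp
      subst hp; exact ⟨h1, le_refl i⟩

lemma card_tmap (i : ℕ) (B : Finset (ℕ × ℕ))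
    (hv : ∀ p ∈ B, 1 ≤ p.1 ∧ p.1 ≤ p.2) :
    (tmap i B).card = B.card + 1 := by
  rw [tmap]
  have hnot : (i, i) ∉ B.image (tint i) := by
    intro hmem
    obtain ⟨q, hq, hker⟩ := Finset.mem_image.mp hmem
    have hvq := hv q hq
    obtain ⟨a, b⟩ := q
    simp only [tint] at hker
    split_ifs at hker <;> simp_all [Prod.ext_iff] <;> omega
  rw [Finset.card_union_of_disjoint (Finset.disjoint_singleton_right.mpr hnot),
    Finset.card_singleton, Finset.card_image_of_injOn]
  intro p hp q hq hpq
  have hvp := hv p hp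
  have hvq := hv q hq
  obtain ⟨a, b⟩ := p
  obtain ⟨c, d⟩ := q
  simp only [tint] at hpq
  split_ifs at hpq <;> simp_all [Prod.ext_iff] <;> omega

/-- `D` odd, `B ∈ S_D`, `|B| = (D−1)/2` implies `η_D ∉ 𝔼_B` and
`𝔽η_D ⊕ 𝔼_B ∈ 𝒻(V_D)`. -/
theorem stmt9 (D : ℕ) (hD : Odd D) (B : Finset (ℕ × ℕ)) (hB : IsS D B)
    (h : B.card = (D - 1) / 2) :
    eta D ∉ EB B ∧ IsF D (Submodule.span (ZMod 2) {eta D} ⊔ EB B) := by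
  revert hD h
  induction hB with
  | empty D =>
    intro hD h
    rw [Nat.odd_iff] at hD
    rw [Finset.card_empty] at h
    have hD1 : D = 1 := by omega
    subst hD1
    have hEB : EB (∅ : Finset (ℕ × ℕ)) = ⊥ := by simp [EB]
    have heta : eta 1 = e 1 := by
      rw [eta, show (Finset.Icc 1 1).filter (fun j => j % 2 = 1) = {1} from by decide,
        Finset.sum_singleton]
    constructor
    · rw [hEB, Submodule.mem_bot, heta, e]
      intro h0
      exact one_ne_zero (Finsupp.single_eq_zero.mp h0)
    · rw [hEB, sup_bot_eq, heta]
      exact IsF.one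
  | one =>
    intro hD h
    rw [Finset.card_singleton] at h
    omega
  | step D i B' h1 h2 hB' IH =>
    intro hD h
    have hDodd : Odd D := by rw [Nat.odd_iff] at *; omega
    have hcard : B'.card = (D - 1) / 2 := by
      rw [card_tmap i B' (isS_valid hB')] at h
      rw [Nat.odd_iff] at hDodd
      omega
    obtain ⟨hnotin, hF⟩ := IH hDodd hcard
    have hee : e i + e i = 0 := by
      rw [← two_smul (ZMod 2) (e i), show (2 : ZMod 2) = 0 from rfl, zero_smul]
    constructor
    · rw [EB_tmap]
      intro hmem
      rw [Submodule.mem_sup] at hmem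
      obtain ⟨y, hy, z, hz, hyz⟩ := hmem
      obtain ⟨x, hx, rfl⟩ := Submodule.mem_map.mp hy
      obtain ⟨c, rfl⟩ := Submodule.mem_span_singleton.mp hz
      have hphi := congrArg (phi i) hyz
      rw [map_add, map_smul, phi_Tlin, phi_e_self, phi_eta (D + 2) i hD h1 h2,
        zero_add, smul_eq_mul, mul_one] at hphi
      rw [hphi, one_smul] at hyz
      have hTx : Tlin i x = Tlin i (eta D) := by
        rw [Tlin_eta' D i hDodd h1 h2, ← hyz, add_assoc, hee, add_zero]
      have hx' : x = eta D := by
        have h' := congrArg (Slin i) hTx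
        rwa [Slin_Tlin, Slin_Tlin] at h'
      exact hnotin (hx' ▸ hx)
    · rw [EB_tmap]
      have key : Submodule.span (ZMod 2) {eta (D + 2)} ⊔
            ((EB B').map (Tlin i) ⊔ Submodule.span (ZMod 2) {e i}) =
          Submodule.map (Tlin i) (Submodule.span (ZMod 2) {eta D} ⊔ EB B') ⊔
            Submodule.span (ZMod 2) {e i} := by
        rw [Submodule.map_sup, Submodule.map_span, Set.image_singleton,
          Tlin_eta' D i hDodd h1 h2, sup_assoc]
        exact (sup_span_add (eta (D + 2)) (e i) _
          (Submodule.mem_sup_right (Submodule.mem_span_singleton_self (e i)))).symm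
      rw [key]
      exact IsF.step D i _ h1 h2 hF
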